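/- Let G be a graph with no induced subgraph isomorphic to any of 2P3, P3+K3, 2K3, C4, C5, C6, containing an induced copy of 2K2 on vertices {1,2,3,4} with edges 12 and 34. If some vertex x is adjacent to exactly the vertices 1 and 3 among {1,2,3,4}, then no vertex outside {1,2,3,4} is adjacent to exactly {1,4}, exactly {2,3}, exactly {2,4}, exactly {1,2,4}, or exactly {2,3,4} among {1,2,3,4}. -/

import Mathlib

open scoped Classical

/-- Graph on `Fin n` with the given edge list. -/
def graphOfList (n : ℕ) (l : List (ℕ × ℕ)) : SimpleGraph (Fin n) :=
  SimpleGraph.fromRel (fun a b => ((a : ℕ), (b : ℕ)) ∈ l)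

/-- `G` contains no induced subgraph isomorphic to `H`. -/
def Free {α : Type*} {V : Type*} (H : SimpleGraph α) (G : SimpleGraph V) : Prop :=
  IsEmpty (H ↪g G)

def twoP3 : SimpleGraph (Fin 6) := graphOfList 6 [(0,1),(1,2),(3,4),(4,5)]
def p3PlusK3 : SimpleGraph (Fin 6) := graphOfList 6 [(0,1),(1,2),(3,4),(4,5),(3,5)]
def twoK3 : SimpleGraph (Fin 6) := graphOfList 6 [(0,1),(1,2),(0,2),(3,4),(4,5),(3,5)]
def cycle4 : SimpleGraph (Fin 4) := graphOfList 4 [(0,1),(1,2),(2,3),(3,0)]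
def cycle5 : SimpleGraph (Fin 5) := graphOfList 5 [(0,1),(1,2),(2,3),(3,4),(4,0)]
def cycle6 : SimpleGraph (Fin 6) := graphOfList 6 [(0,1),(1,2),(2,3),(3,4),(4,5),(5,0)]

/-- `G` is `{2P3, P3+K3, 2K3, C4, C5, C6}`-free. -/
def FFree {V : Type*} (G : SimpleGraph V) : Prop :=
  Free twoP3 G ∧ Free p3PlusK3 G ∧ Free twoK3 G ∧ Free cycle4 G ∧ Free cycle5 G ∧ Free cycle6 G

/-- `v1 v2 v3 v4` form an induced `2K2` with edges `v1v2` and `v3v4`. -/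
def Induced2K2 {V : Type*} (G : SimpleGraph V) (v1 v2 v3 v4 : V) : Prop :=
  v1 ≠ v2 ∧ v1 ≠ v3 ∧ v1 ≠ v4 ∧ v2 ≠ v3 ∧ v2 ≠ v4 ∧ v3 ≠ v4 ∧
  G.Adj v1 v2 ∧ G.Adj v3 v4 ∧ ¬ G.Adj v1 v3 ∧ ¬ G.Adj v1 v4 ∧ ¬ G.Adj v2 v3 ∧ ¬ G.Adj v2 v4

lemma c4_contra {V : Type*} {G : SimpleGraph V} (h : Free cycle4 G) {a b c d : V}
    (nac : a ≠ c) (nbd : b ≠ d)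
    (hab : G.Adj a b) (hbc : G.Adj b c) (hcd : G.Adj c d) (hda : G.Adj d a)
    (hac : ¬ G.Adj a c) (hbd : ¬ G.Adj b d) : False := by
  refine h.false ⟨⟨![a,b,c,d], ?_⟩, ?_⟩
  · intro i j hij
    fin_cases i <;> fin_cases j <;> simp_all
  · intro i j
    fin_cases i <;> fin_cases j <;>
      simp [cycle4, graphOfList, SimpleGraph.fromRel,
        (show ((0:Fin 4):ℕ) = 0 from rfl), (show ((1:Fin 4):ℕ) = 1 from rfl),
        (show ((2:Fin 4):ℕ) = 2 from rfl), (show ((3:Fin 4):ℕ) = 3 from rfl)] <;>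
      first
      | exact hab | exact hab.symm | exact hbc | exact hbc.symm
      | exact hcd | exact hcd.symm | exact hda | exact hda.symm
      | exact hac | exact fun h' => hac (G.adj_symm h')
      | exact hbd | exact fun h' => hbd (G.adj_symm h')

lemma c5_contra {V : Type*} {G : SimpleGraph V} (h : Free cycle5 G) {a b c d e : V}
    (nac : a ≠ c) (nad : a ≠ d) (nbd : b ≠ d) (nbe : b ≠ e) (nce : c ≠ e)
    (hab : G.Adj a b) (hbc : G.Adj b c) (hcd : G.Adj c d) (hde : G.Adj d e) (hea : G.Adj e a)
    (hac : ¬ G.Adj a c) (had : ¬ G.Adj a d) (hbd : ¬ G.Adj b d)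
    (hbe : ¬ G.Adj b e) (hce : ¬ G.Adj c e) : False := by
  refine h.false ⟨⟨![a,b,c,d,e], ?_⟩, ?_⟩
  · intro i j hij
    fin_cases i <;> fin_cases j <;> simp_all
  · intro i j
    fin_cases i <;> fin_cases j <;>
      simp [cycle5, graphOfList, SimpleGraph.fromRel,
        (show ((0:Fin 5):ℕ) = 0 from rfl), (show ((1:Fin 5):ℕ) = 1 from rfl),
        (show ((2:Fin 5):ℕ) = 2 from rfl), (show ((3:Fin 5):ℕ) = 3 from rfl),
        (show ((4:Fin 5):ℕ) = 4 from rfl)] <;>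
      first
      | exact hab | exact hab.symm | exact hbc | exact hbc.symm
      | exact hcd | exact hcd.symm | exact hde | exact hde.symm
      | exact hea | exact hea.symm
      | exact hac | exact fun h' => hac (G.adj_symm h')
      | exact had | exact fun h' => had (G.adj_symm h')
      | exact hbd | exact fun h' => hbd (G.adj_symm h')
      | exact hbe | exact fun h' => hbe (G.adj_symm h')
      | exact hce | exact fun h' => hce (G.adj_symm h')

set_option maxHeartbeats 1000000 in
set_option maxRecDepth 4000 in
lemma c6_contra {V : Type*} {G : SimpleGraph V} (h : Free cycle6 G) {a b c d e f : V}
    (nac : a ≠ c) (nad : a ≠ d) (nae : a ≠ e) (nbd : b ≠ d) (nbe : b ≠ e) (nbf : b ≠ f)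
    (nce : c ≠ e) (ncf : c ≠ f) (ndf : d ≠ f)
    (hab : G.Adj a b) (hbc : G.Adj b c) (hcd : G.Adj c d) (hde : G.Adj d e)
    (hef : G.Adj e f) (hfa : G.Adj f a)
    (hac : ¬ G.Adj a c) (had : ¬ G.Adj a d) (hae : ¬ G.Adj a e)
    (hbd : ¬ G.Adj b d) (hbe : ¬ G.Adj b e) (hbf : ¬ G.Adj b f)
    (hce : ¬ G.Adj c e) (hcf : ¬ G.Adj c f) (hdf : ¬ G.Adj d f) : False := by
  refine h.false ⟨⟨![a,b,c,d,e,f], ?_⟩, ?_⟩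
  · intro i j hij
    fin_cases i <;> fin_cases j <;>
      simp_all [show (![a,b,c,d,e,f] : Fin 6 → V) 4 = e from rfl,
        show (![a,b,c,d,e,f] : Fin 6 → V) 5 = f from rfl]
  · intro i j
    fin_cases i <;> fin_cases j <;>
      simp [cycle6, graphOfList, SimpleGraph.fromRel,
        (show ((0:Fin 6):ℕ) = 0 from rfl), (show ((1:Fin 6):ℕ) = 1 from rfl),
        (show ((2:Fin 6):ℕ) = 2 from rfl), (show ((3:Fin 6):ℕ) = 3 from rfl),
        (show ((4:Fin 6):ℕ) = 4 from rfl), (show ((5:Fin 6):ℕ) = 5 from rfl)] <;>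
      first
      | exact hab | exact hab.symm | exact hbc | exact hbc.symm
      | exact hcd | exact hcd.symm | exact hde | exact hde.symm
      | exact hef | exact hef.symm | exact hfa | exact hfa.symm
      | exact hac | exact fun h' => hac (G.adj_symm h')
      | exact had | exact fun h' => had (G.adj_symm h')
      | exact hae | exact fun h' => hae (G.adj_symm h')
      | exact hbd | exact fun h' => hbd (G.adj_symm h')
      | exact hbe | exact fun h' => hbe (G.adj_symm h')
      | exact hbf | exact fun h' => hbf (G.adj_symm h')
      | exact hce | exact fun h' => hce (G.adj_symm h')
      | exact hcf | exact fun h' => hcf (G.adj_symm h')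
      | exact hdf | exact fun h' => hdf (G.adj_symm h')

theorem n13_nonempty_forces_empty_sets {V : Type*} (G : SimpleGraph V)
    (hfree : FFree G) (v1 v2 v3 v4 : V) (h2K2 : Induced2K2 G v1 v2 v3 v4)
    (x : V) (hx : x ∉ ({v1, v2, v3, v4} : Set V))
    (hx1 : G.Adj x v1) (hx2 : ¬ G.Adj x v2) (hx3 : G.Adj x v3) (hx4 : ¬ G.Adj x v4) :
    ∀ y : V, y ∉ ({v1, v2, v3, v4} : Set V) →
      ¬ (G.Adj y v1 ∧ ¬ G.Adj y v2 ∧ ¬ G.Adj y v3 ∧ G.Adj y v4) ∧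
      ¬ (¬ G.Adj y v1 ∧ G.Adj y v2 ∧ G.Adj y v3 ∧ ¬ G.Adj y v4) ∧
      ¬ (¬ G.Adj y v1 ∧ G.Adj y v2 ∧ ¬ G.Adj y v3 ∧ G.Adj y v4) ∧
      ¬ (G.Adj y v1 ∧ G.Adj y v2 ∧ ¬ G.Adj y v3 ∧ G.Adj y v4) ∧
      ¬ (¬ G.Adj y v1 ∧ G.Adj y v2 ∧ G.Adj y v3 ∧ G.Adj y v4) := by
  obtain ⟨n12, n13, n14, n23, n24, n34, a12, a34, na13, na14, na23, na24⟩ := h2K2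
  obtain ⟨hc4, hc5, hc6⟩ : Free cycle4 G ∧ Free cycle5 G ∧ Free cycle6 G :=
    ⟨hfree.2.2.2.1, hfree.2.2.2.2.1, hfree.2.2.2.2.2⟩
  simp only [Set.mem_insert_iff, Set.mem_singleton_iff, not_or] at hx
  obtain ⟨nx1, nx2, nx3, nx4⟩ := hx
  intro y hy
  simp only [Set.mem_insert_iff, Set.mem_singleton_iff, not_or] at hy
  obtain ⟨ny1, ny2, ny3, ny4⟩ := hy
  refine ⟨?_, ?_, ?_, ?_, ?_⟩
  · -- N_{14}
    rintro ⟨hy1, hy2, hy3, hy4⟩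
    have nxy : y ≠ x := fun h => hx4 (h ▸ hy4)
    by_cases hxy : G.Adj y x
    · -- C4 : y, x, v3, v4
      exact c4_contra hc4 ny3 nx4 hxy hx3 a34 hy4.symm hy3 hx4
    · -- C5 : y, v1, x, v3, v4
      exact c5_contra hc5 nxy ny3 n13 n14 nx4
        hy1 hx1.symm hx3 a34 hy4.symm hxy hy3 na13 na14 hx4
  · -- N_{23}
    rintro ⟨hy1, hy2, hy3, hy4⟩
    have nxy : y ≠ x := fun h => hx2 (h ▸ hy2)
    by_cases hxy : G.Adj y x
    · -- C4 : y, x, v1, v2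
      exact c4_contra hc4 ny1 nx2 hxy hx1 a12 hy2.symm hy1 hx2
    · -- C5 : y, v2, v1, x, v3
      exact c5_contra hc5 ny1 nxy (Ne.symm nx2) n23 n13
        hy2 a12.symm hx1.symm hx3 hy3.symm
        hy1 hxy (fun h => hx2 (G.adj_symm h)) na23 na13
  · -- N_{24}
    rintro ⟨hy1, hy2, hy3, hy4⟩
    have nxy : y ≠ x := fun h => hx2 (h ▸ hy2)
    by_cases hxy : G.Adj y x
    · -- C4 : x, v1, v2, y
      exact c4_contra hc4 nx2 (Ne.symm ny1) hx1 a12 hy2.symm hxy hx2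
        (fun h => hy1 (G.adj_symm h))
    · -- C6 : v1, v2, y, v4, v3, x
      exact c6_contra hc6 (Ne.symm ny1) n14 n13 n24 n23 (Ne.symm nx2) ny3 nxy (Ne.symm nx4)
        a12 hy2.symm hy4 a34.symm hx3.symm hx1
        (fun h => hy1 (G.adj_symm h)) na14 na13 na24 na23 (fun h => hx2 (G.adj_symm h))
        hy3 hxy (fun h => hx4 (G.adj_symm h))
  · -- N_{124}
    rintro ⟨hy1, hy2, hy3, hy4⟩
    have nxy : y ≠ x := fun h => hx2 (h ▸ hy2)
    by_cases hxy : G.Adj y x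
    · -- C4 : x, y, v4, v3
      exact c4_contra hc4 nx4 ny3 (G.adj_symm hxy) hy4 a34.symm hx3.symm hx4 hy3
    · -- C5 : x, v1, y, v4, v3
      exact c5_contra hc5 (Ne.symm nxy) nx4 n14 n13 ny3
        hx1 hy1.symm hy4 a34.symm hx3.symm
        (fun h => hxy (G.adj_symm h)) hx4 na14 na13 hy3
  · -- N_{234}
    rintro ⟨hy1, hy2, hy3, hy4⟩
    have nxy : y ≠ x := fun h => hx2 (h ▸ hy2)
    by_cases hxy : G.Adj y x
    · -- C4 : x, y, v2, v1
      exact c4_contra hc4 nx2 ny1 (G.adj_symm hxy) hy2 a12.symm hx1.symm hx2 hy1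
    · -- C5 : x, v3, y, v2, v1
      exact c5_contra hc5 (Ne.symm nxy) nx2 (Ne.symm n23) (Ne.symm n13) ny1
        hx3 hy3.symm hy2 a12.symm hx1.symm
        (fun h => hxy (G.adj_symm h)) hx2 (fun h => na23 (G.adj_symm h)) (fun h => na13 (G.adj_symm h)) hy1
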